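/- Let L₊ := span{Û^N(b₀,b₀) : N ∈ ℤ} and L₋ := span{Û^N(b₀,−b₀) : N ∈ ℤ}. Then Û(L₊) = L₊, Û(L₋) = L₋, the vectors (b_N, 0) and (0, b_N) belong to L₊ + L₋ for every N ∈ ℤ, and L₊ + L₋ is dense in H × H. -/

import Mathlib

set_option maxHeartbeats 1000000


noncomputable section

/-- `Hsp` is the complex Hilbert space `ℓ²(ℤ)` of square-summable bilateral
complex sequences. -/
abbrev Hsp : Type := lp (fun _ : ℤ => ℂ) 2

/-- `e n` is the standard orthonormal basis vector `b_n` (indicator sequence of `n`). -/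
noncomputable def e (n : ℤ) : Hsp := lp.single 2 n 1

lemma e_apply (n m : ℤ) : (e n : ∀ _ : ℤ, ℂ) m = if m = n then 1 else 0 := by
  by_cases h : m = n
  · subst h; simp [e, lp.single_apply_self]
  · simp [e, lp.single_apply_ne _ _ _ h, h]

lemma coord (f : Hsp) (m : ℤ) : (inner ℂ (e m) f : ℂ) = f m := by
  simp [e, lp.inner_single_left, RCLike.inner_apply]

lemma equiv_zpow_one_add (U : Hsp ≃L[ℂ] Hsp) (N : ℤ) (x : Hsp) :
    (U ^ (1 + N)) x = U ((U ^ N) x) := by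
  rw [zpow_add, zpow_one]; rfl


lemma equiv_zpow_step (V : Hsp ≃L[ℂ] Hsp) {M N : ℤ} (h : M = 1 + N) (x : Hsp) :
    (V ^ M) x = V ((V ^ N) x) := by
  subst h; rw [zpow_add, zpow_one]; rfl

lemma div_chain (a b c : ℂ) (hb : b ≠ 0) : a / b * (b / c) = a / c := by
  field_simp

/-- With `L₊ := span{Û^N(b₀,b₀) : N ∈ ℤ}` and `L₋ := span{Û^N(b₀,−b₀) : N ∈ ℤ}`,
where `Û(x,y) = (Ux, (U*)⁻¹y)` and `Û^N(b₀,±b₀) = (U^N b₀, ±(U*)^{-N} b₀)`: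
`Û(L₊) = L₊`, `Û(L₋) = L₋`, the vectors `(b_N, 0)` and `(0, b_N)` belong to
`L₊ + L₋` for all `N ∈ ℤ`, and `L₊ + L₋` is dense in `H × H`. -/
theorem stmt16 (u : ℤ → ℂ) (hu : ∀ n : ℤ, u n ≠ 0)
    (hbdd : BddAbove (Set.range fun n : ℤ => ‖u (n + 1) / u n‖))
    (hinf : ∃ δ : ℝ, 0 < δ ∧ ∀ n : ℤ, δ ≤ ‖u (n + 1) / u n‖)
    (U Ustar : Hsp ≃L[ℂ] Hsp)
    (hU : ∀ n : ℤ, U (e n) = (u (n + 1) / u n) • e (n + 1))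
    (hUstar : (Ustar : Hsp →L[ℂ] Hsp) = ContinuousLinearMap.adjoint (U : Hsp →L[ℂ] Hsp))
    (Uhat : (Hsp × Hsp) →L[ℂ] (Hsp × Hsp))
    (hUhat : ∀ x y : Hsp, Uhat (x, y) = (U x, Ustar⁻¹ y))
    (Lp Lm : Submodule ℂ (Hsp × Hsp))
    (hLp : Lp = Submodule.span ℂ
      (Set.range fun N : ℤ => (((U ^ N) (e 0), (Ustar ^ (-N)) (e 0)) : Hsp × Hsp)))
    (hLm : Lm = Submodule.span ℂ
      (Set.range fun N : ℤ => (((U ^ N) (e 0), -(Ustar ^ (-N)) (e 0)) : Hsp × Hsp))) :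
    Submodule.map (Uhat : (Hsp × Hsp) →ₗ[ℂ] (Hsp × Hsp)) Lp = Lp ∧
    Submodule.map (Uhat : (Hsp × Hsp) →ₗ[ℂ] (Hsp × Hsp)) Lm = Lm ∧
    (∀ N : ℤ, ((e N, (0 : Hsp)) : Hsp × Hsp) ∈ Lp ⊔ Lm) ∧
    (∀ N : ℤ, (((0 : Hsp), e N) : Hsp × Hsp) ∈ Lp ⊔ Lm) ∧
    Dense ((Lp ⊔ Lm : Submodule ℂ (Hsp × Hsp)) : Set (Hsp × Hsp)) := by
  have hconj : ∀ n : ℤ, (starRingEnd ℂ) (u n) ≠ 0 := fun n h =>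
    hu n (by rw [← Complex.conj_conj (u n), h, map_zero])
  -- action of U^N on e 0
  have hUz : ∀ N : ℤ, (U ^ N) (e 0) = (u N / u 0) • e N := by
    intro N
    induction N using Int.induction_on with
    | zero => rw [zpow_zero, div_self (hu 0), one_smul]; rfl
    | succ k ih =>
        rw [equiv_zpow_step U (show ((k:ℤ)+1) = 1 + k by ring) (e 0), ih, map_smul, hU,
          smul_smul, mul_comm, div_chain _ _ _ (hu k)]
    | pred k ih =>
        apply U.injective
        have h1 : U ((U ^ (-(k : ℤ) - 1)) (e 0)) = (U ^ (-(k : ℤ))) (e 0) :=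
          (equiv_zpow_step U (show (-(k:ℤ)) = 1 + (-(k:ℤ) - 1) by ring) (e 0)).symm
        rw [h1, ih, map_smul, hU (-(k:ℤ) - 1),
          smul_smul, show (-(k:ℤ) - 1 + 1) = -(k:ℤ) by ring, mul_comm,
          div_chain _ _ _ (hu (-(k:ℤ) - 1))]
  -- action of Ustar on e (n+1)
  have hUs : ∀ n : ℤ, Ustar (e (n + 1)) = (starRingEnd ℂ) (u (n + 1) / u n) • e n := by
    intro n
    apply lp.ext
    funext m
    have hL : (Ustar (e (n + 1)) : ∀ _ : ℤ, ℂ) m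
        = (starRingEnd ℂ) (u (m + 1) / u m) * (e (n + 1) : ∀ _ : ℤ, ℂ) (m + 1) := by
      rw [← coord]
      have h2 : Ustar (e (n + 1))
          = ContinuousLinearMap.adjoint (U : Hsp →L[ℂ] Hsp) (e (n + 1)) := by
        rw [← hUstar]; rfl
      rw [h2, ContinuousLinearMap.adjoint_inner_right]
      have : (U : Hsp →L[ℂ] Hsp) (e m) = (u (m + 1) / u m) • e (m + 1) := hU m
      rw [this, inner_smul_left, coord]
    have hR : (((starRingEnd ℂ) (u (n + 1) / u n) • e n : Hsp) : ∀ _ : ℤ, ℂ) m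
        = (starRingEnd ℂ) (u (n + 1) / u n) * (e n : ∀ _ : ℤ, ℂ) m := by
      rw [lp.coeFn_smul]; rfl
    rw [hL, hR, e_apply, e_apply]
    by_cases h : m = n
    · subst h; simp
    · have h2 : ¬ (m + 1 = n + 1) := fun hh => h (by omega)
      simp [h, h2]
  -- action of Ustar^(-N) on e 0
  have hUsz : ∀ N : ℤ, (Ustar ^ (-N)) (e 0)
      = ((starRingEnd ℂ) (u 0) / (starRingEnd ℂ) (u N)) • e N := by
    intro N
    induction N using Int.induction_on with
    | zero => rw [neg_zero, zpow_zero, div_self (hconj 0), one_smul]; rfl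
    | succ k ih =>
        apply Ustar.injective
        have h1 : Ustar ((Ustar ^ (-((k : ℤ) + 1))) (e 0)) = (Ustar ^ (-(k : ℤ))) (e 0) :=
          (equiv_zpow_step Ustar (show (-(k:ℤ)) = 1 + (-((k:ℤ) + 1)) by ring) (e 0)).symm
        rw [h1, ih, map_smul, hUs k, smul_smul, map_div₀,
          div_chain _ _ _ (hconj (k + 1))]
    | pred k ih =>
        have h1 : (Ustar ^ (-(-(k : ℤ) - 1))) (e 0) = Ustar ((Ustar ^ (-(-(k:ℤ)))) (e 0)) :=
          equiv_zpow_step Ustar (show (-(-(k:ℤ) - 1)) = 1 + (-(-(k:ℤ))) by ring) (e 0)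
        have h2 : Ustar (e (-(k:ℤ)))
            = (starRingEnd ℂ) (u (-(k:ℤ)) / u (-(k:ℤ) - 1)) • e (-(k:ℤ) - 1) := by
          have := hUs (-(k:ℤ) - 1)
          rw [show (-(k:ℤ) - 1 + 1) = -(k:ℤ) by ring] at this
          exact this
        rw [h1, ih, map_smul, h2, smul_smul, map_div₀,
          div_chain _ _ _ (hconj (-(k:ℤ)))]
  -- the generators
  set v : ℤ → Hsp × Hsp := fun N => (((U ^ N) (e 0), (Ustar ^ (-N)) (e 0)) : Hsp × Hsp) with hv
  set w : ℤ → Hsp × Hsp := fun N => (((U ^ N) (e 0), -(Ustar ^ (-N)) (e 0)) : Hsp × Hsp) with hw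
  -- Uhat shifts generators
  have hUinvz : ∀ N : ℤ, Ustar⁻¹ ((Ustar ^ (-N)) (e 0)) = (Ustar ^ (-(N + 1))) (e 0) := by
    intro N
    apply Ustar.injective
    have h1 : (Ustar ^ (-N)) (e 0) = Ustar ((Ustar ^ (-(N + 1))) (e 0)) :=
      equiv_zpow_step Ustar (show (-N) = 1 + (-(N + 1)) by ring) (e 0)
    have h2 : Ustar (Ustar⁻¹ ((Ustar ^ (-N)) (e 0))) = (Ustar ^ (-N)) (e 0) :=
      Ustar.apply_symm_apply _
    rw [h2, ← h1]
  have hshiftv : ∀ N : ℤ, Uhat (v N) = v (N + 1) := by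
    intro N
    rw [hv]
    simp only
    rw [hUhat, hUinvz, ← equiv_zpow_step U (show (N + 1) = 1 + N by ring) (e 0)]
  have hshiftw : ∀ N : ℤ, Uhat (w N) = w (N + 1) := by
    intro N
    rw [hw]
    simp only
    rw [hUhat, map_neg, hUinvz, ← equiv_zpow_step U (show (N + 1) = 1 + N by ring) (e 0)]
  -- invariance of spans under Uhat
  have himg : ∀ (f : ℤ → Hsp × Hsp), (∀ N, Uhat (f N) = f (N + 1)) →
      (⇑Uhat) '' Set.range f = Set.range f := by
    intro f hf
    rw [← Set.range_comp]
    have h1 : (⇑Uhat ∘ f) = f ∘ (fun N : ℤ => N + 1) := funext fun N => hf N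
    rw [h1]
    exact Function.Surjective.range_comp (fun m => ⟨m - 1, by ring⟩) f
  have hmapP : Submodule.map (Uhat : (Hsp × Hsp) →ₗ[ℂ] (Hsp × Hsp)) Lp = Lp := by
    rw [hLp, Submodule.map_span, ContinuousLinearMap.coe_coe, himg v hshiftv]
  have hmapM : Submodule.map (Uhat : (Hsp × Hsp) →ₗ[ℂ] (Hsp × Hsp)) Lm = Lm := by
    rw [hLm, Submodule.map_span, ContinuousLinearMap.coe_coe, himg w hshiftw]
  -- membership of generators
  have hvmem : ∀ N : ℤ, v N ∈ Lp := fun N => by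
    rw [hLp]; exact Submodule.subset_span ⟨N, rfl⟩
  have hwmem : ∀ N : ℤ, w N ∈ Lm := fun N => by
    rw [hLm]; exact Submodule.subset_span ⟨N, rfl⟩
  -- explicit form of generators
  have hvform : ∀ N : ℤ, v N = ((u N / u 0) • e N,
      ((starRingEnd ℂ) (u 0) / (starRingEnd ℂ) (u N)) • e N) := by
    intro N; rw [hv]; simp only; rw [hUz, hUsz]
  have hwform : ∀ N : ℤ, w N = ((u N / u 0) • e N,
      -(((starRingEnd ℂ) (u 0) / (starRingEnd ℂ) (u N)) • e N)) := by
    intro N; rw [hw]; simp only; rw [hUz, hUsz]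
  -- (e N, 0) ∈ Lp ⊔ Lm
  have hmem1 : ∀ N : ℤ, ((e N, (0 : Hsp)) : Hsp × Hsp) ∈ Lp ⊔ Lm := by
    intro N
    set a : ℂ := u 0 / (2 * u N) with ha
    refine Submodule.mem_sup.2 ⟨a • v N, Submodule.smul_mem _ _ (hvmem N),
      a • w N, Submodule.smul_mem _ _ (hwmem N), ?_⟩
    rw [hvform, hwform]
    refine Prod.ext ?_ ?_
    · show a • ((u N / u 0) • e N) + a • ((u N / u 0) • e N) = e N
      rw [smul_smul, ← add_smul]
      have : a * (u N / u 0) + a * (u N / u 0) = 1 := by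
        rw [ha]; field_simp [hu 0, hu N]; ring
      rw [this, one_smul]
    · show a • (((starRingEnd ℂ) (u 0) / (starRingEnd ℂ) (u N)) • e N) +
        a • (-(((starRingEnd ℂ) (u 0) / (starRingEnd ℂ) (u N)) • e N)) = (0 : Hsp)
      rw [smul_neg, add_neg_cancel]
  -- (0, e N) ∈ Lp ⊔ Lm
  have hmem2 : ∀ N : ℤ, (((0 : Hsp), e N) : Hsp × Hsp) ∈ Lp ⊔ Lm := by
    intro N
    set b : ℂ := (starRingEnd ℂ) (u N) / (2 * (starRingEnd ℂ) (u 0)) with hb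
    refine Submodule.mem_sup.2 ⟨b • v N, Submodule.smul_mem _ _ (hvmem N),
      (-b) • w N, Submodule.smul_mem _ _ (hwmem N), ?_⟩
    rw [hvform, hwform]
    refine Prod.ext ?_ ?_
    · show b • ((u N / u 0) • e N) + (-b) • ((u N / u 0) • e N) = (0 : Hsp)
      rw [neg_smul, add_neg_cancel]
    · show b • (((starRingEnd ℂ) (u 0) / (starRingEnd ℂ) (u N)) • e N) +
        (-b) • (-(((starRingEnd ℂ) (u 0) / (starRingEnd ℂ) (u N)) • e N)) = e N
      rw [smul_neg, neg_smul, neg_neg, smul_smul, ← add_smul]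
      have : b * ((starRingEnd ℂ) (u 0) / (starRingEnd ℂ) (u N)) +
          b * ((starRingEnd ℂ) (u 0) / (starRingEnd ℂ) (u N)) = 1 := by
        rw [hb]; field_simp [hconj 0, hconj N]; ring
      rw [this, one_smul]
  -- density
  have hdense : Dense ((Lp ⊔ Lm : Submodule ℂ (Hsp × Hsp)) : Set (Hsp × Hsp)) := by
    intro z
    obtain ⟨x, y⟩ := z
    have hx : HasSum (fun i : ℤ => ((lp.single 2 i (x i) : Hsp), (lp.single 2 i (y i) : Hsp)))
        ((x, y) : Hsp × Hsp) :=
      (lp.hasSum_single ENNReal.ofNat_ne_top x).prodMk (lp.hasSum_single ENNReal.ofNat_ne_top y)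
    refine mem_closure_of_tendsto hx (Filter.Eventually.of_forall fun s => ?_)
    refine SetLike.mem_coe.2 (Submodule.sum_mem _ fun i _ => ?_)
    have h1 : ((lp.single 2 i (x i) : Hsp), (lp.single 2 i (y i) : Hsp))
        = x i • ((e i, (0 : Hsp)) : Hsp × Hsp) + y i • (((0 : Hsp), e i) : Hsp × Hsp) := by
      refine Prod.ext ?_ ?_
      · show (lp.single 2 i (x i) : Hsp) = x i • e i + y i • (0 : Hsp)
        rw [smul_zero, add_zero, e, ← lp.single_smul, smul_eq_mul, mul_one]
      · show (lp.single 2 i (y i) : Hsp) = x i • (0 : Hsp) + y i • e i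
        rw [smul_zero, zero_add, e, ← lp.single_smul, smul_eq_mul, mul_one]
    rw [h1]
    exact Submodule.add_mem _ (Submodule.smul_mem _ _ (hmem1 i))
      (Submodule.smul_mem _ _ (hmem2 i))
  exact ⟨hmapP, hmapM, hmem1, hmem2, hdense⟩
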